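/- (One step contraction for mu = 0) Let F : R^d -> R be L-smooth and lambda-strongly convex with lambda <= L, let w* be a minimizer of F (grad F(w*) = 0), let z_1,...,z_k be i.i.d. uniform on the unit sphere, set tau = (d+k-1)/k, eta = 1/(tau*L), and let w' = w - eta * (1/k) * sum_r d * <grad F(w), z_r> * z_r. Then E[ ||w' - w*||_2^2 ] <= (1 - 2*lambda / (tau*(L + lambda))) * ||w - w*||_2^2. -/

import Mathlib

open MeasureTheory

abbrev Euc (d : ℕ) := EuclideanSpace ℝ (Fin d)

/-- The uniform (rotation-invariant) probability measure on the unit sphere in `ℝ^d`. -/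
noncomputable def uniformSphere (d : ℕ) :
    Measure (Metric.sphere (0 : Euc d) 1) :=
  ((volume : Measure (Euc d)).toSphere Set.univ)⁻¹ • (volume : Measure (Euc d)).toSphere

instance uniformSphere_finite (d : ℕ) : IsFiniteMeasure (uniformSphere d) := by
  constructor
  rw [uniformSphere, Measure.smul_apply, smul_eq_mul]
  exact lt_of_le_of_lt (ENNReal.inv_mul_le_one _) ENNReal.one_lt_top

open MeasureTheory Real Set Filter

noncomputable def Jint (n : ℕ) : ℝ := ∫ x in Ioi (0:ℝ), x ^ n * Real.exp (-x^2)

lemma Jint_integrableOn (n : ℕ) : IntegrableOn (fun x : ℝ => x ^ n * Real.exp (-x^2)) (Ioi 0) := by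
  have h := integrableOn_rpow_mul_exp_neg_mul_sq (b := 1) one_pos (s := n)
    (neg_one_lt_zero.trans_le (Nat.cast_nonneg n))
  refine h.congr_fun (fun x hx => ?_) measurableSet_Ioi
  simp only [Real.rpow_natCast, neg_one_mul]

lemma Jint_pos (n : ℕ) : 0 < Jint n := by
  rw [Jint]
  apply (setIntegral_pos_iff_support_of_nonneg_ae ?_ (Jint_integrableOn n)).2
  · refine lt_of_lt_of_le ?_ (measure_mono (fun x hx => ⟨?_, hx⟩))
    · simp
    · have hx' : (0:ℝ) < x := hx
      simp only [Function.mem_support]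
      positivity
  · filter_upwards [ae_restrict_mem measurableSet_Ioi] with x hx
    have hx' : (0:ℝ) < x := hx
    positivity

lemma Jint_rec (n : ℕ) : Jint (n + 2) = ((n + 1 : ℝ) / 2) * Jint n := by
  have key : ∫ x in Ioi (0:ℝ),
      (x ^ (n+2) * Real.exp (-x^2) - ((n+1:ℝ)/2) * (x ^ n * Real.exp (-x^2))) = 0 := by
    have hderiv : ∀ x ∈ Ici (0:ℝ), HasDerivAt (fun x : ℝ => -(x ^ (n+1) * Real.exp (-x^2)) / 2)
        (x ^ (n+2) * Real.exp (-x^2) - ((n+1:ℝ)/2) * (x ^ n * Real.exp (-x^2))) x := by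
      intro x _
      have h1 : HasDerivAt (fun x : ℝ => x ^ (n+1)) ((n+1 : ℝ) * x ^ n) x := by
        simpa using hasDerivAt_pow (n+1) x
      have h2 : HasDerivAt (fun x : ℝ => Real.exp (-x^2)) (-(2*x) * Real.exp (-x^2)) x := by
        have hx2 : HasDerivAt (fun x : ℝ => -x^2) (-(2*x)) x := by
          simpa using (hasDerivAt_pow 2 x).fun_neg
        simpa [mul_comm] using hx2.exp
      have := ((h1.fun_mul h2).fun_neg).div_const 2
      exact this.congr_deriv (by ring)
    have hint : IntegrableOn (fun x : ℝ =>
        x ^ (n+2) * Real.exp (-x^2) - ((n+1:ℝ)/2) * (x ^ n * Real.exp (-x^2))) (Ioi 0) :=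
      (Jint_integrableOn (n+2)).sub ((Jint_integrableOn n).const_mul _)
    have hg : Tendsto (fun x : ℝ => Real.exp (-(1/2) * x)) atTop (nhds 0) := by
      have h2 : Tendsto (fun x : ℝ => (1/2 : ℝ) * x) atTop atTop :=
        tendsto_id.const_mul_atTop (by norm_num)
      refine Filter.Tendsto.congr (fun x => ?_) (Real.tendsto_exp_neg_atTop_nhds_zero.comp h2)
      simp only [Function.comp_apply]
      congr 1
      ring
    have h0 : Tendsto (fun x : ℝ => x ^ (n+1) * Real.exp (-x^2)) atTop (nhds 0) := by
      have h := (rpow_mul_exp_neg_mul_sq_isLittleO_exp_neg (b := 1) one_pos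
        (((n+1 : ℕ) : ℝ))).tendsto_zero_of_tendsto hg
      refine h.congr (fun x => ?_)
      rw [Real.rpow_natCast, neg_one_mul]
    have htend : Tendsto (fun x : ℝ => -(x ^ (n+1) * Real.exp (-x^2)) / 2) atTop (nhds 0) := by
      simpa using (h0.neg).div_const 2
    rw [integral_Ioi_of_hasDerivAt_of_tendsto' hderiv hint htend]
    norm_num
  rw [integral_sub (Jint_integrableOn (n+2)) ((Jint_integrableOn n).const_mul _),
    MeasureTheory.integral_const_mul] at key
  have h2 : Jint (n+2) - ((n+1:ℝ)/2) * Jint n = 0 := key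
  linarith


lemma pow_exp_integrable (n : ℕ) : Integrable (fun x : ℝ => x ^ n * Real.exp (-x^2)) := by
  have h := integrable_rpow_mul_exp_neg_mul_sq (b := 1) one_pos (s := n)
    (neg_one_lt_zero.trans_le (Nat.cast_nonneg n))
  refine h.congr (Filter.Eventually.of_forall fun x => ?_)
  simp only [Real.rpow_natCast, neg_one_mul]

lemma pow_exp_tendsto_atTop (n : ℕ) :
    Tendsto (fun x : ℝ => x ^ n * Real.exp (-x^2)) atTop (nhds 0) := by
  have hg : Tendsto (fun x : ℝ => Real.exp (-(1/2) * x)) atTop (nhds 0) := by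
    have h2 : Tendsto (fun x : ℝ => (1/2 : ℝ) * x) atTop atTop :=
      tendsto_id.const_mul_atTop (by norm_num)
    refine Filter.Tendsto.congr (fun x => ?_) (Real.tendsto_exp_neg_atTop_nhds_zero.comp h2)
    simp only [Function.comp_apply]
    congr 1
    ring
  have h := (rpow_mul_exp_neg_mul_sq_isLittleO_exp_neg (b := 1) one_pos
    ((n : ℕ) : ℝ)).tendsto_zero_of_tendsto hg
  refine h.congr (fun x => ?_)
  rw [Real.rpow_natCast, neg_one_mul]

lemma pow_exp_tendsto_atBot (n : ℕ) :
    Tendsto (fun x : ℝ => x ^ n * Real.exp (-x^2)) atBot (nhds 0) := by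
  have h := ((pow_exp_tendsto_atTop n).comp tendsto_neg_atBot_atTop).const_mul ((-1 : ℝ)^n)
  rw [mul_zero] at h
  refine h.congr (fun x => ?_)
  simp only [Function.comp_apply]
  have h1 : (-x : ℝ)^n = (-1)^n * x^n := by rw [neg_pow]
  have h2 : ((-1 : ℝ))^n * (-1 : ℝ)^n = 1 := by
    rw [← mul_pow]; norm_num
  rw [h1]
  have : (-x : ℝ)^2 = x^2 := by ring
  rw [this]
  calc (-1:ℝ)^n * ((-1)^n * x^n * Real.exp (-x^2))
      = ((-1:ℝ)^n * (-1)^n) * (x^n * Real.exp (-x^2)) := by ring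
    _ = x^n * Real.exp (-x^2) := by rw [h2, one_mul]

lemma G1_eq : ∫ x : ℝ, x * Real.exp (-x^2) = 0 := by
  have key : ∫ x : ℝ, x * Real.exp (-x^2) = 0 - 0 := by
    refine integral_of_hasDerivAt_of_tendsto (f := fun x : ℝ => -Real.exp (-x^2) / 2)
      (fun x => ?_) (by simpa using pow_exp_integrable 1) ?_ ?_
    · have hx2 : HasDerivAt (fun x : ℝ => -x^2) (-(2*x)) x := by
        simpa using (hasDerivAt_pow 2 x).fun_neg
      have := (hx2.exp.fun_neg).div_const 2
      exact this.congr_deriv (by ring)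
    · have := ((pow_exp_tendsto_atBot 0).neg).div_const 2
      simp only [pow_zero, one_mul] at this
      simpa using this
    · have := ((pow_exp_tendsto_atTop 0).neg).div_const 2
      simp only [pow_zero, one_mul] at this
      simpa using this
  simpa using key

lemma G2_eq : ∫ x : ℝ, x^2 * Real.exp (-x^2) = (1/2) * ∫ x : ℝ, Real.exp (-x^2) := by
  have key : ∫ x : ℝ, (x^2 * Real.exp (-x^2) - (1/2) * Real.exp (-x^2)) = 0 - 0 := by
    refine integral_of_hasDerivAt_of_tendsto (f := fun x : ℝ => -(x * Real.exp (-x^2)) / 2)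
      (fun x => ?_) ?_ ?_ ?_
    · have hx2 : HasDerivAt (fun x : ℝ => -x^2) (-(2*x)) x := by
        simpa using (hasDerivAt_pow 2 x).fun_neg
      have := (((hasDerivAt_id x).fun_mul hx2.exp).fun_neg).div_const 2
      exact this.congr_deriv (by simp only [id_eq]; ring)
    · have h0 : Integrable (fun x : ℝ => Real.exp (-x^2)) := by
        simpa using pow_exp_integrable 0
      exact (pow_exp_integrable 2).sub (h0.const_mul _)
    · have := ((pow_exp_tendsto_atBot 1).neg).div_const 2
      simpa [pow_one] using this
    · have := ((pow_exp_tendsto_atTop 1).neg).div_const 2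
      simpa [pow_one] using this
  have h0 : Integrable (fun x : ℝ => Real.exp (-x^2)) := by
    simpa using pow_exp_integrable 0
  rw [integral_sub (pow_exp_integrable 2) (h0.const_mul _), MeasureTheory.integral_const_mul] at key
  simp only [sub_zero] at key
  linarith [key]

lemma G0_pos : 0 < ∫ x : ℝ, Real.exp (-x^2) := by
  have : ∫ x : ℝ, Real.exp (-x^2) = Real.sqrt (Real.pi / 1) := by
    simpa [neg_one_mul] using integral_gaussian 1
  rw [this]
  positivity

open MeasureTheory Real Set Filter Metric

abbrev Euc' (d : ℕ) := EuclideanSpace ℝ (Fin d)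

lemma euc_norm_sq {d : ℕ} (x : Euc' d) : ‖x‖^2 = ∑ i, (x i)^2 := by
  rw [EuclideanSpace.norm_eq, Real.sq_sqrt (by positivity)]
  congr 1
  ext i
  rw [Real.norm_eq_abs, sq_abs]

lemma integral_polar {d : ℕ} (hd : 0 < d) (F0 : Euc' d → ℝ) (q : ℕ)
    (Ffull : Euc' d → ℝ)
    (hFf : ∀ x : Euc' d, x ≠ 0 → Ffull x = F0 (‖x‖⁻¹ • x) * (‖x‖^q * Real.exp (-‖x‖^2))) :
    ∫ x, Ffull x
      = (∫ z : Metric.sphere (0 : Euc' d) 1, F0 z ∂((volume : Measure (Euc' d)).toSphere))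
        * Jint (d - 1 + q) := by
  haveI : Nontrivial (Euc' d) := by
    have : Nonempty (Fin d) := ⟨⟨0, hd⟩⟩
    infer_instance
  set μ := (volume : Measure (Euc' d)) with hμ
  have hdim : Module.finrank ℝ (Euc' d) = d := finrank_euclideanSpace_fin
  set G : Metric.sphere (0 : Euc' d) 1 × Ioi (0:ℝ) → ℝ :=
    fun p => F0 p.1 * ((p.2 : ℝ)^q * Real.exp (-(p.2:ℝ)^2)) with hG
  have h1 : ∫ x, Ffull x ∂μ = ∫ x : ({0}ᶜ : Set (Euc' d)), Ffull x ∂(μ.comap (↑)) := by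
    rw [integral_subtype_comap (measurableSet_singleton 0).compl Ffull,
      MeasureTheory.restrict_compl_singleton]
  have h2 : ∫ x : ({0}ᶜ : Set (Euc' d)), Ffull x ∂(μ.comap (↑))
      = ∫ p, G p ∂(μ.toSphere.prod (.volumeIoiPow (Module.finrank ℝ (Euc' d) - 1))) := by
    rw [← (μ.measurePreserving_homeomorphUnitSphereProd).integral_comp
      (Homeomorph.measurableEmbedding _) G]
    refine integral_congr_ae (Filter.Eventually.of_forall fun x => ?_)
    have hx : (x : Euc' d) ≠ 0 := x.2
    show Ffull (x : Euc' d) = G ((homeomorphUnitSphereProd (Euc' d)) x)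
    rw [hFf (x : Euc' d) hx]
    simp [hG, homeomorphUnitSphereProd_apply_fst_coe, homeomorphUnitSphereProd_apply_snd_coe]
  have h3 : ∫ p, G p ∂(μ.toSphere.prod (.volumeIoiPow (Module.finrank ℝ (Euc' d) - 1)))
      = (∫ z : Metric.sphere (0 : Euc' d) 1, F0 z ∂μ.toSphere)
        * ∫ r : Ioi (0:ℝ), ((r:ℝ)^q * Real.exp (-(r:ℝ)^2))
            ∂(Measure.volumeIoiPow (Module.finrank ℝ (Euc' d) - 1)) :=
    integral_prod_mul (fun z : Metric.sphere (0 : Euc' d) 1 => F0 z)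
      (fun r : Ioi (0:ℝ) => (r:ℝ)^q * Real.exp (-(r:ℝ)^2))
  have h4 : ∫ r : Ioi (0:ℝ), ((r:ℝ)^q * Real.exp (-(r:ℝ)^2))
      ∂(Measure.volumeIoiPow (Module.finrank ℝ (Euc' d) - 1)) = Jint (d - 1 + q) := by
    rw [hdim]
    simp only [Measure.volumeIoiPow, ENNReal.ofReal]
    rw [integral_withDensity_eq_integral_smul
      ((measurable_subtype_coe.pow_const _).real_toNNReal)]
    rw [integral_subtype_comap measurableSet_Ioi
      (fun a : ℝ => Real.toNNReal (a ^ (d-1)) • ((a:ℝ)^q * Real.exp (-(a:ℝ)^2)))]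
    rw [Jint, setIntegral_congr_fun measurableSet_Ioi (fun x hx => ?_)]
    have hx' : (0:ℝ) < x := hx
    rw [NNReal.smul_def, Real.coe_toNNReal _ (pow_nonneg hx'.le _), smul_eq_mul, pow_add]
    ring
  rw [h1, h2, h3, h4]

lemma integral_euc_eq_pi {d : ℕ} (FF : Euc' d → ℝ) :
    ∫ x : Euc' d, FF x
      = ∫ y : Fin d → ℝ, FF ((MeasurableEquiv.toLp 2 (Fin d → ℝ)) y) := by
  have h := MeasurePreserving.symm _ (EuclideanSpace.volume_preserving_symm_measurableEquiv_toLp (Fin d))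
  exact (h.integral_comp' FF).symm

noncomputable def Gz : ℝ := ∫ x : ℝ, Real.exp (-x^2)

lemma gauss_pi {d : ℕ} (e : Fin d → ℕ) :
    ∫ x : Euc' d, ((∏ t, (x t)^(e t)) * Real.exp (-‖x‖^2))
      = ∏ t, ∫ s : ℝ, s^(e t) * Real.exp (-s^2) := by
  rw [integral_euc_eq_pi]
  rw [← MeasureTheory.integral_fintype_prod_eq_prod
    (f := fun t (s : ℝ) => s^(e t) * Real.exp (-s^2))]
  refine integral_congr_ae (Filter.Eventually.of_forall fun y => ?_)
  have hcoord : ∀ t, ((MeasurableEquiv.toLp 2 (Fin d → ℝ)) y) t = y t := by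
    intro t
    simp [MeasurableEquiv.coe_toLp]
  have hnorm : ‖(MeasurableEquiv.toLp 2 (Fin d → ℝ)) y‖^2 = ∑ t, (y t)^2 := by
    rw [euc_norm_sq]
    exact Finset.sum_congr rfl fun t _ => by rw [hcoord]
  simp only [hcoord, hnorm]
  rw [← Finset.sum_neg_distrib, Real.exp_sum, Finset.prod_mul_distrib]

lemma cont_integrable {Y : Type*} [MeasurableSpace Y] [TopologicalSpace Y] [CompactSpace Y]
    [OpensMeasurableSpace Y] (μ : MeasureTheory.Measure Y) [IsFiniteMeasure μ] {f : Y → ℝ}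
    (hf : Continuous f) : Integrable f μ :=
  hf.integrable_of_hasCompactSupport
    (IsCompact.of_isClosed_subset isCompact_univ (isClosed_tsupport f) (subset_univ _))

lemma sphereA_diag {d : ℕ} (hd : 0 < d) (i : Fin d) :
    (∫ z : sphere (0 : Euc' d) 1, ((z : Euc' d) i * (z : Euc' d) i)
        ∂((volume : Measure (Euc' d)).toSphere)) * Jint (d+1) = (1/2) * Gz^d := by
  have hFf : ∀ x : Euc' d, x ≠ 0 →
      (x i * x i * Real.exp (-‖x‖^2))
        = ((‖x‖⁻¹ • x) i * (‖x‖⁻¹ • x) i) * (‖x‖^2 * Real.exp (-‖x‖^2)) := by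
    intro x hx
    have hn : ‖x‖ ≠ 0 := norm_ne_zero_iff.2 hx
    simp only [PiLp.smul_apply, smul_eq_mul]
    field_simp
  have hp := integral_polar hd (fun v : Euc' d => v i * v i) 2
    (fun x : Euc' d => x i * x i * Real.exp (-‖x‖^2)) hFf
  have hcast : d - 1 + 2 = d + 1 := by omega
  rw [hcast] at hp
  have hgauss : ∫ x : Euc' d, (x i * x i * Real.exp (-‖x‖^2)) = (1/2) * Gz^d := by
    have h1 := gauss_pi (fun t : Fin d => if t = i then 2 else 0)
    have h2 : ∀ x : Euc' d, (∏ t, (x t)^(if t = i then 2 else 0)) = x i * x i := by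
      intro x
      have : ∀ t : Fin d, (x t)^(if t = i then 2 else 0) = if t = i then (x i)^2 else 1 := by
        intro t
        split_ifs with h
        · rw [h]
        · rw [pow_zero]
      simp only [this]
      rw [Finset.prod_ite_eq' Finset.univ i (fun t => (x i)^2)]
      simp [sq]
    simp only [h2] at h1
    rw [h1]
    have h3 : ∀ t : Fin d, (∫ s : ℝ, s^(if t = i then 2 else 0) * Real.exp (-s^2))
        = if t = i then (1/2) * Gz else Gz := by
      intro t
      split_ifs with h
      · rw [G2_eq]; rfl
      · simp only [pow_zero, one_mul]; rfl
    rw [Finset.prod_congr rfl (fun t _ => h3 t)]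
    rw [← Finset.mul_prod_erase Finset.univ _ (Finset.mem_univ i)]
    rw [if_pos rfl]
    rw [Finset.prod_congr rfl (fun t ht => if_neg (Finset.ne_of_mem_erase ht))]
    rw [Finset.prod_const, Finset.card_erase_of_mem (Finset.mem_univ i), Finset.card_univ,
      Fintype.card_fin]
    rw [mul_assoc, ← pow_succ']
    congr 2
    omega
  rw [hgauss] at hp
  exact hp.symm

lemma sphereA_off {d : ℕ} (hd : 0 < d) {i j : Fin d} (hij : i ≠ j) :
    (∫ z : sphere (0 : Euc' d) 1, ((z : Euc' d) i * (z : Euc' d) j)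
        ∂((volume : Measure (Euc' d)).toSphere)) * Jint (d+1) = 0 := by
  have hFf : ∀ x : Euc' d, x ≠ 0 →
      (x i * x j * Real.exp (-‖x‖^2))
        = ((‖x‖⁻¹ • x) i * (‖x‖⁻¹ • x) j) * (‖x‖^2 * Real.exp (-‖x‖^2)) := by
    intro x hx
    have hn : ‖x‖ ≠ 0 := norm_ne_zero_iff.2 hx
    simp only [PiLp.smul_apply, smul_eq_mul]
    field_simp
  have hp := integral_polar hd (fun v : Euc' d => v i * v j) 2
    (fun x : Euc' d => x i * x j * Real.exp (-‖x‖^2)) hFf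
  have hcast : d - 1 + 2 = d + 1 := by omega
  rw [hcast] at hp
  have hgauss : ∫ x : Euc' d, (x i * x j * Real.exp (-‖x‖^2)) = 0 := by
    have h1 := gauss_pi (fun t : Fin d => if t = i then 1 else if t = j then 1 else 0)
    have h2 : ∀ x : Euc' d,
        (∏ t, (x t)^(if t = i then 1 else if t = j then 1 else 0)) = x i * x j := by
      intro x
      set h : Fin d → ℝ := fun t => (x t)^(if t = i then 1 else if t = j then 1 else 0) with hh
      rw [← Finset.mul_prod_erase Finset.univ h (Finset.mem_univ i)]
      rw [← Finset.mul_prod_erase (Finset.univ.erase i) h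
        (Finset.mem_erase.2 ⟨hij.symm, Finset.mem_univ j⟩)]
      have hi : h i = x i := by simp [hh]
      have hjv : h j = x j := by simp [hh, hij.symm]
      have hrest : ∀ t ∈ (Finset.univ.erase i).erase j, h t = 1 := by
        intro t ht
        have ht1 : t ≠ j := Finset.ne_of_mem_erase ht
        have ht2 : t ≠ i := Finset.ne_of_mem_erase (Finset.mem_of_mem_erase ht)
        simp [hh, ht1, ht2]
      rw [hi, hjv, Finset.prod_congr rfl hrest, Finset.prod_const_one]
      ring
    simp only [h2] at h1
    rw [h1]
    refine Finset.prod_eq_zero (Finset.mem_univ i) ?_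
    rw [if_pos rfl]
    simpa using G1_eq
  rw [hgauss] at hp
  exact hp.symm

lemma sphereB {d : ℕ} (hd : 0 < d) :
    ((volume : Measure (Euc' d)).toSphere Set.univ).toReal * Jint (d-1) = Gz^d := by
  have hFf : ∀ x : Euc' d, x ≠ 0 →
      (Real.exp (-‖x‖^2)) = (1 : ℝ) * (‖x‖^0 * Real.exp (-‖x‖^2)) := by
    intro x hx
    simp
  have hp := integral_polar hd (fun _ : Euc' d => (1:ℝ)) 0
    (fun x : Euc' d => Real.exp (-‖x‖^2)) hFf
  have hgauss : ∫ x : Euc' d, Real.exp (-‖x‖^2) = Gz^d := by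
    have h1 := gauss_pi (fun _ : Fin d => 0)
    simp only [pow_zero, Finset.prod_const_one, one_mul] at h1
    rw [h1, Finset.prod_const, Finset.card_univ, Fintype.card_fin]
    rfl
  rw [hgauss, integral_const, smul_eq_mul, mul_one] at hp
  rw [Nat.add_zero] at hp
  exact hp.symm

lemma Gz_pos : 0 < Gz := G0_pos

lemma sphereB_pos {d : ℕ} (hd : 0 < d) :
    0 < ((volume : Measure (Euc' d)).toSphere Set.univ).toReal := by
  have h := sphereB hd
  have h1 : (0:ℝ) < Gz ^ d := pow_pos Gz_pos d
  nlinarith [Jint_pos (d-1), (ENNReal.toReal_nonneg :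
    (0:ℝ) ≤ ((volume : Measure (Euc' d)).toSphere Set.univ).toReal)]

lemma toSphere_univ_ne_zero {d : ℕ} (hd : 0 < d) :
    ((volume : Measure (Euc' d)).toSphere Set.univ) ≠ 0 := by
  intro h
  have := sphereB_pos hd
  rw [h] at this
  simp at this

lemma toSphere_univ_ne_top {d : ℕ} :
    ((volume : Measure (Euc' d)).toSphere Set.univ) ≠ ⊤ :=
  (measure_lt_top _ _).ne

lemma uniformSphere_prob {d : ℕ} (hd : 0 < d) :
    IsProbabilityMeasure (uniformSphere d) := by
  constructor
  rw [uniformSphere, Measure.smul_apply, smul_eq_mul]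
  exact ENNReal.inv_mul_cancel (toSphere_univ_ne_zero hd) toSphere_univ_ne_top

lemma uniformSphere_moment {d : ℕ} (hd : 0 < d) (i j : Fin d) :
    ∫ z : sphere (0 : Euc' d) 1, ((z : Euc' d) i * (z : Euc' d) j) ∂(uniformSphere d)
      = if i = j then (d:ℝ)⁻¹ else 0 := by
  rw [uniformSphere, integral_smul_measure, smul_eq_mul, ENNReal.toReal_inv]
  set B := ((volume : Measure (Euc' d)).toSphere Set.univ).toReal with hB
  have hBpos : 0 < B := sphereB_pos hd
  have hBJ : B * Jint (d-1) = Gz^d := sphereB hd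
  have hJrec : Jint (d+1) = ((d:ℝ)/2) * Jint (d-1) := by
    have h := Jint_rec (d-1)
    have h1 : d - 1 + 2 = d + 1 := by omega
    rw [h1] at h
    have h2 : ((d - 1 : ℕ) : ℝ) + 1 = (d : ℝ) := by
      have : (1:ℕ) ≤ d := hd
      push_cast [Nat.cast_sub this]
      ring
    rw [h2] at h
    exact h
  have hd' : (0:ℝ) < d := Nat.cast_pos.2 hd
  by_cases hij : i = j
  · subst hij
    rw [if_pos rfl]
    have hA := sphereA_diag hd i
    have hJ1 : 0 < Jint (d-1) := Jint_pos _
    have hGz : (0:ℝ) < Gz^d := pow_pos Gz_pos d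
    rw [hJrec] at hA
    -- hA : A * ((d/2) * Jint (d-1)) = (1/2) * Gz^d
    -- B * Jint (d-1) = Gz^d
    -- goal : B⁻¹ * A = d⁻¹
    set A := ∫ z : sphere (0 : Euc' d) 1, ((z : Euc' d) i * (z : Euc' d) i)
      ∂((volume : Measure (Euc' d)).toSphere) with hAdef
    field_simp
    nlinarith [hA, hBJ, hJ1, hBpos, hd']
  · rw [if_neg hij]
    have hA := sphereA_off hd hij
    have hJ : 0 < Jint (d+1) := Jint_pos _
    have : (∫ z : sphere (0 : Euc' d) 1, ((z : Euc' d) i * (z : Euc' d) j)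
        ∂((volume : Measure (Euc' d)).toSphere)) = 0 := by
      rcases mul_eq_zero.1 hA with h | h
      · exact h
      · exact absurd h hJ.ne'
    rw [this, mul_zero]

lemma real_inner_euc {d : ℕ} (u z : Euc' d) : (inner ℝ u z : ℝ) = ∑ i, u i * z i := by
  simp [PiLp.inner_apply, RCLike.inner_apply, conj_trivial, mul_comm]

lemma sphere_coord_continuous {d : ℕ} (i : Fin d) :
    Continuous (fun z : Metric.sphere (0 : Euc' d) 1 => (z : Euc' d) i) :=
  (EuclideanSpace.proj i).continuous.comp continuous_subtype_val

lemma uniformSphere_inner_mul_coord {d : ℕ} (hd : 0 < d) (u : Euc' d) (i : Fin d) :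
    ∫ z : Metric.sphere (0 : Euc' d) 1, (inner ℝ u (z : Euc' d) : ℝ) * (z : Euc' d) i
      ∂(uniformSphere d) = u i / d := by
  have hexp : ∀ z : Metric.sphere (0 : Euc' d) 1,
      (inner ℝ u (z : Euc' d) : ℝ) * (z : Euc' d) i
        = ∑ j, u j * ((z : Euc' d) j * (z : Euc' d) i) := by
    intro z
    rw [real_inner_euc, Finset.sum_mul]
    exact Finset.sum_congr rfl fun j _ => by ring
  rw [integral_congr_ae (Filter.Eventually.of_forall hexp)]
  rw [integral_finset_sum _ (fun j _ => ?_)]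
  · rw [Finset.sum_congr rfl (fun j _ => ?_)]
    · rw [Finset.sum_congr rfl (fun j _ => MeasureTheory.integral_const_mul (u j) _)]
      rw [Finset.sum_congr rfl (fun j _ => by rw [uniformSphere_moment hd j i])]
      rw [Finset.sum_eq_single i]
      · simp [div_eq_mul_inv]
      · intro b _ hb
        simp [hb]
      · simp
    · rfl
  · exact cont_integrable _
      (continuous_const.mul ((sphere_coord_continuous j).mul (sphere_coord_continuous i)))

lemma uniformSphere_inner_sq {d : ℕ} (hd : 0 < d) (u v : Euc' d) :
    ∫ z : Metric.sphere (0 : Euc' d) 1,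
        (inner ℝ u (z : Euc' d) : ℝ) * (inner ℝ v (z : Euc' d) : ℝ)
      ∂(uniformSphere d) = (inner ℝ u v : ℝ) / d := by
  have hexp : ∀ z : Metric.sphere (0 : Euc' d) 1,
      (inner ℝ u (z : Euc' d) : ℝ) * (inner ℝ v (z : Euc' d) : ℝ)
        = ∑ j, v j * ((inner ℝ u (z : Euc' d) : ℝ) * (z : Euc' d) j) := by
    intro z
    rw [real_inner_euc v, Finset.mul_sum]
    exact Finset.sum_congr rfl fun j _ => by ring
  rw [integral_congr_ae (Filter.Eventually.of_forall hexp)]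
  rw [integral_finset_sum _ (fun j _ => ?_)]
  · rw [Finset.sum_congr rfl (fun j _ => MeasureTheory.integral_const_mul (v j) _)]
    rw [Finset.sum_congr rfl (fun j _ => by rw [uniformSphere_inner_mul_coord hd u j])]
    rw [real_inner_euc u, Finset.sum_div]
    exact Finset.sum_congr rfl fun j _ => by ring
  · refine cont_integrable _ ?_
    have h1 : Continuous (fun z : Metric.sphere (0 : Euc' d) 1 => (inner ℝ u (z : Euc' d) : ℝ)) :=
      (innerSL ℝ u).continuous.comp continuous_subtype_val
    exact (continuous_const.mul (h1.mul (sphere_coord_continuous j)))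

lemma integral_pi_prod {ι : Type*} [Fintype ι] {X : ι → Type*} [∀ i, MeasurableSpace (X i)]
    (μ : ∀ i, Measure (X i)) [∀ i, IsProbabilityMeasure (μ i)] (f : ∀ i, X i → ℝ) :
    ∫ x : ∀ i, X i, ∏ i, f i (x i) ∂Measure.pi μ = ∏ i, ∫ x, f i x ∂(μ i) := by
  letI : ∀ i, MeasureSpace (X i) := fun i => ⟨μ i⟩
  exact MeasureTheory.integral_fintype_prod_eq_prod f

lemma integral_pi_eval {k : ℕ} {Y : Type*} [MeasurableSpace Y] (μ : Measure Y)
    [IsProbabilityMeasure μ] (r : Fin k) (f : Y → ℝ) :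
    ∫ z : Fin k → Y, f (z r) ∂(Measure.pi fun _ => μ) = ∫ y, f y ∂μ := by
  have h := integral_pi_prod (fun _ : Fin k => μ)
    (fun t => if t = r then f else fun _ => (1:ℝ))
  have h1 : ∀ z : Fin k → Y, (∏ t, (if t = r then f else fun _ => (1:ℝ)) (z t)) = f (z r) := by
    intro z
    have : ∀ t : Fin k, (if t = r then f else fun _ => (1:ℝ)) (z t)
        = if t = r then f (z t) else 1 := fun t => by split_ifs <;> rfl
    simp only [this]
    rw [Finset.prod_ite_eq' Finset.univ r (fun t => f (z t)), if_pos (Finset.mem_univ r)]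
  have h2 : ∀ t : Fin k, (∫ y, (if t = r then f else fun _ => (1:ℝ)) y ∂μ)
      = if t = r then ∫ y, f y ∂μ else 1 := by
    intro t
    split_ifs
    · rfl
    · simp
  simp only [h1, h2] at h
  rw [h, Finset.prod_ite_eq' Finset.univ r (fun _ => ∫ y, f y ∂μ), if_pos (Finset.mem_univ r)]

lemma integral_pi_eval2 {k : ℕ} {Y : Type*} [MeasurableSpace Y] (μ : Measure Y)
    [IsProbabilityMeasure μ] {r s : Fin k} (hrs : r ≠ s) (f h : Y → ℝ) :
    ∫ z : Fin k → Y, f (z r) * h (z s) ∂(Measure.pi fun _ => μ)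
      = (∫ y, f y ∂μ) * ∫ y, h y ∂μ := by
  have hprod := integral_pi_prod (fun _ : Fin k => μ)
    (fun t => if t = r then f else if t = s then h else fun _ => (1:ℝ))
  have h1 : ∀ z : Fin k → Y,
      (∏ t, (if t = r then f else if t = s then h else fun _ => (1:ℝ)) (z t))
        = f (z r) * h (z s) := by
    intro z
    set gg : Fin k → ℝ :=
      fun t => (if t = r then f else if t = s then h else fun _ => (1:ℝ)) (z t) with hgg
    rw [← Finset.mul_prod_erase Finset.univ gg (Finset.mem_univ r)]
    rw [← Finset.mul_prod_erase (Finset.univ.erase r) gg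
      (Finset.mem_erase.2 ⟨hrs.symm, Finset.mem_univ s⟩)]
    have hr : gg r = f (z r) := by simp [hgg]
    have hs : gg s = h (z s) := by simp [hgg, hrs.symm]
    have hrest : ∀ t ∈ (Finset.univ.erase r).erase s, gg t = 1 := by
      intro t ht
      have ht1 : t ≠ s := Finset.ne_of_mem_erase ht
      have ht2 : t ≠ r := Finset.ne_of_mem_erase (Finset.mem_of_mem_erase ht)
      simp [hgg, ht1, ht2]
    rw [hr, hs, Finset.prod_congr rfl hrest, Finset.prod_const_one]
    ring
  have h2 : ∀ t : Fin k,
      (∫ y, (if t = r then f else if t = s then h else fun _ => (1:ℝ)) y ∂μ)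
        = if t = r then ∫ y, f y ∂μ else if t = s then ∫ y, h y ∂μ else 1 := by
    intro t
    split_ifs <;> simp
  simp only [h1, h2] at hprod
  rw [hprod]
  set gg : Fin k → ℝ :=
    fun t => if t = r then ∫ y, f y ∂μ else if t = s then ∫ y, h y ∂μ else 1 with hgg
  rw [← Finset.mul_prod_erase Finset.univ gg (Finset.mem_univ r)]
  rw [← Finset.mul_prod_erase (Finset.univ.erase r) gg
    (Finset.mem_erase.2 ⟨hrs.symm, Finset.mem_univ s⟩)]
  have hr : gg r = ∫ y, f y ∂μ := by simp [hgg]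
  have hs : gg s = ∫ y, h y ∂μ := by simp [hgg, hrs.symm]
  have hrest : ∀ t ∈ (Finset.univ.erase r).erase s, gg t = 1 := by
    intro t ht
    have ht1 : t ≠ s := Finset.ne_of_mem_erase ht
    have ht2 : t ≠ r := Finset.ne_of_mem_erase (Finset.mem_of_mem_erase ht)
    simp [hgg, ht1, ht2]
  rw [hr, hs, Finset.prod_congr rfl hrest, Finset.prod_const_one]
  ring

section Analysis

set_option maxHeartbeats 1000000

variable {E : Type*} [NormedAddCommGroup E] [InnerProductSpace ℝ E] [CompleteSpace E]

lemma line_hasDerivAt (F : E → ℝ) (hF : Differentiable ℝ F) (c v : E) (t : ℝ) :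
    HasDerivAt (fun t : ℝ => F (c + t • v))
      (inner ℝ (gradient F (c + t • v)) v : ℝ) t := by
  have hline : HasDerivAt (fun t : ℝ => c + t • v) v t := by
    simpa using ((hasDerivAt_id t).smul_const v).const_add c
  have hgrad := (hF (c + t • v)).hasGradientAt
  rw [HasGradientAt, HasGradientAtFilter] at hgrad
  have hfd : HasFDerivAt F (InnerProductSpace.toDual ℝ (E) (gradient F (c + t • v)))
      (c + t • v) := hgrad
  have := hfd.comp_hasDerivAt t hline
  exact this.congr_deriv (by simp [InnerProductSpace.toDual_apply_apply])

lemma descent_lemma (F : E → ℝ) (L : ℝ) (hL : 0 < L) (hF : Differentiable ℝ F)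
    (hsmooth : ∀ x y : E, ‖gradient F x - gradient F y‖ ≤ L * ‖x - y‖)
    (x y : E) :
    F y ≤ F x + (inner ℝ (gradient F x) (y - x) : ℝ) + L / 2 * ‖y - x‖ ^ 2 := by
  set v := y - x with hv
  set g0 : ℝ := (inner ℝ (gradient F x) v : ℝ) with hg0
  set h : ℝ → ℝ := fun t =>
    F (x + t • v) - F x - t * g0 - L * ‖v‖^2 * t^2 / 2 with hh
  have hderiv : ∀ t : ℝ, HasDerivAt h
      ((inner ℝ (gradient F (x + t • v)) v : ℝ) - g0 - L * ‖v‖^2 * t) t := by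
    intro t
    have h1 := line_hasDerivAt F hF x v t
    have h2 : HasDerivAt (fun t : ℝ => F x + t * g0 + L * ‖v‖^2 * t^2 / 2)
        (g0 + L * ‖v‖^2 * t) t := by
      have ha : HasDerivAt (fun t : ℝ => t * g0) g0 t := by
        simpa using (hasDerivAt_id t).mul_const g0
      have hb : HasDerivAt (fun t : ℝ => L * ‖v‖^2 * t^2 / 2) (L * ‖v‖^2 * t) t := by
        have := ((hasDerivAt_pow 2 t).const_mul (L * ‖v‖^2)).div_const 2
        exact this.congr_deriv (by ring)
      exact (ha.const_add (F x)).fun_add hb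
    have := h1.fun_sub h2
    refine (this.congr_deriv (by ring)).congr_of_eventuallyEq
      (Filter.Eventually.of_forall fun s => ?_)
    simp only [hh]
    ring
  have hanti : AntitoneOn h (Set.Icc 0 1) := by
    refine antitoneOn_of_deriv_nonpos (convex_Icc 0 1) ?_ ?_ ?_
    · exact Continuous.continuousOn (by
        refine Continuous.sub (Continuous.sub (Continuous.sub ?_ continuous_const) ?_) ?_
        · exact hF.continuous.comp (by continuity)
        · exact continuous_id.mul continuous_const
        · exact (continuous_const.mul (continuous_pow 2)).div_const 2)
    · intro t _
      exact ((hderiv t).differentiableAt).differentiableWithinAt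
    · intro t ht
      rw [interior_Icc] at ht
      rw [(hderiv t).deriv]
      have hb1 : (inner ℝ (gradient F (x + t • v)) v : ℝ) - g0
          = (inner ℝ (gradient F (x + t • v) - gradient F x) v : ℝ) := by
        rw [inner_sub_left]
      have hb2 : (inner ℝ (gradient F (x + t • v) - gradient F x) v : ℝ)
          ≤ ‖gradient F (x + t • v) - gradient F x‖ * ‖v‖ :=
        real_inner_le_norm _ _
      have hb3 : ‖gradient F (x + t • v) - gradient F x‖ ≤ L * (t * ‖v‖) := by
        have := hsmooth (x + t • v) x
        simpa [norm_smul, abs_of_pos ht.1] using this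
      have hv0 : (0:ℝ) ≤ ‖v‖ := norm_nonneg _
      nlinarith [ht.1.le, hb2, hb3]
  have h10 : h 1 ≤ h 0 := hanti (by constructor <;> norm_num) (by constructor <;> norm_num)
    zero_le_one
  simp only [hh, one_smul, zero_smul, add_zero, zero_pow, one_pow] at h10
  simp only [hv] at h10 ⊢
  have hxy : x + (y - x) = y := by abel
  rw [hxy] at h10
  nlinarith [h10]

lemma norm_sub_sq_aux (a b : E) :
    ‖a - b‖^2 = ‖a‖^2 - 2 * (inner ℝ a b : ℝ) + ‖b‖^2 := norm_sub_sq_real a b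

lemma coco (F : E → ℝ) (L lam : ℝ) (hL : 0 < L) (hlam : 0 < lam) (hlamL : lam ≤ L)
    (hF : Differentiable ℝ F)
    (hsmooth : ∀ x y : E, ‖gradient F x - gradient F y‖ ≤ L * ‖x - y‖)
    (hconv : ∀ x y : E,
      F y ≥ F x + (inner ℝ (gradient F x) (y - x) : ℝ) + lam / 2 * ‖y - x‖ ^ 2)
    (x y : E) :
    (inner ℝ (gradient F x - gradient F y) (x - y) : ℝ)
      ≥ lam * L / (lam + L) * ‖x - y‖^2
        + 1 / (lam + L) * ‖gradient F x - gradient F y‖^2 := by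
  set gx := gradient F x with hgx
  set gy := gradient F y with hgy
  set G := gx - gy with hG
  set e := x - y with he
  set t : ℝ := (inner ℝ G e : ℝ) with ht
  set p : ℝ := ‖e‖^2 with hp
  set q : ℝ := ‖G‖^2 with hq
  have hLlam : 0 < lam + L := by linarith
  have hpnn : 0 ≤ p := sq_nonneg _
  have hqnn : 0 ≤ q := sq_nonneg _
  -- key norm identity
  have hident : ∀ a b : E, ‖b - a‖^2 = ‖b‖^2 - ‖a‖^2 - 2 * (inner ℝ a (b - a) : ℝ) := by
    intro a b
    rw [inner_sub_right, norm_sub_sq_aux b a, real_inner_comm]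
    have : (inner ℝ a a : ℝ) = ‖a‖^2 := real_inner_self_eq_norm_sq a
    linarith [this]
  -- strong convexity in "shifted" form
  have hC : ∀ a b : E, F b - lam/2 * ‖b‖^2
      ≥ F a - lam/2 * ‖a‖^2 + (inner ℝ (gradient F a - lam • a) (b - a) : ℝ) := by
    intro a b
    have h1 := hconv a b
    have h2 := hident a b
    have h3 : (inner ℝ (gradient F a - lam • a) (b - a) : ℝ)
        = (inner ℝ (gradient F a) (b - a) : ℝ) - lam * (inner ℝ a (b - a) : ℝ) := by
      rw [inner_sub_left, real_inner_smul_left]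
    rw [h3]
    nlinarith [h1, h2]
  have hD : ∀ a b : E, F b - lam/2 * ‖b‖^2
      ≤ F a - lam/2 * ‖a‖^2 + (inner ℝ (gradient F a - lam • a) (b - a) : ℝ)
        + (L - lam)/2 * ‖b - a‖^2 := by
    intro a b
    have h1 := descent_lemma F L hL hF hsmooth a b
    have h2 := hident a b
    have h3 : (inner ℝ (gradient F a - lam • a) (b - a) : ℝ)
        = (inner ℝ (gradient F a) (b - a) : ℝ) - lam * (inner ℝ a (b - a) : ℝ) := by
      rw [inner_sub_left, real_inner_smul_left]
    rw [h3]
    nlinarith [h1, h2]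
  have hu : (gx - lam • x) - (gy - lam • y) = G - lam • e := by
    rw [hG, he, smul_sub]
    abel
  have hinner_ue : (inner ℝ (G - lam • e) e : ℝ) = t - lam * p := by
    rw [inner_sub_left, real_inner_smul_left, ← ht]
    have : (inner ℝ e e : ℝ) = p := real_inner_self_eq_norm_sq e
    rw [this]
  have hnorm_u : ‖G - lam • e‖^2 = q - 2 * lam * t + lam^2 * p := by
    rw [norm_sub_sq_aux, real_inner_smul_right, norm_smul]
    rw [Real.norm_eq_abs, abs_of_pos hlam]
    rw [mul_pow, ← ht, ← hq, ← hp]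
    ring
  rcases lt_or_eq_of_le hlamL with hlt | heqq
  · -- lam < L : co-coercivity of the convexified function
    set M : ℝ := L - lam with hM
    have hMpos : 0 < M := by simp [hM]; linarith
    set u : E := (gx - lam • x) - (gy - lam • y) with hudef
    have key : (inner ℝ u e : ℝ) ≥ ‖u‖^2 / M := by
      have haux : ∀ a b : E, F a - lam/2 * ‖a‖^2 - (F b - lam/2 * ‖b‖^2)
          + (inner ℝ (gradient F a - lam • a) (b - a) : ℝ)
          + ‖(gradient F a - lam • a) - (gradient F b - lam • b)‖^2 / (2*M) ≤ 0 := by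
        intro a b
        set ua := gradient F a - lam • a with hua
        set ub := gradient F b - lam • b with hub
        set z : E := b + M⁻¹ • (ua - ub) with hz
        have h1 := hC a z
        have h2 := hD b z
        have hz_b : z - b = M⁻¹ • (ua - ub) := by rw [hz]; abel
        have hz_a : z - a = (b - a) + M⁻¹ • (ua - ub) := by rw [hz]; abel
        have e1 : (inner ℝ ua (z - a) : ℝ)
            = (inner ℝ ua (b - a) : ℝ) + M⁻¹ * (inner ℝ ua (ua - ub) : ℝ) := by
          rw [hz_a, inner_add_right, real_inner_smul_right]
        have e2 : (inner ℝ ub (z - b) : ℝ) = M⁻¹ * (inner ℝ ub (ua - ub) : ℝ) := by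
          rw [hz_b, real_inner_smul_right]
        have e3 : ‖z - b‖^2 = M⁻¹^2 * ‖ua - ub‖^2 := by
          rw [hz_b, norm_smul, Real.norm_eq_abs, abs_of_pos (by positivity : (0:ℝ) < M⁻¹),
            mul_pow]
        have e4 : (inner ℝ ua (ua - ub) : ℝ) - (inner ℝ ub (ua - ub) : ℝ) = ‖ua - ub‖^2 := by
          rw [← inner_sub_left]
          exact real_inner_self_eq_norm_sq _
        set N : ℝ := ‖ua - ub‖^2 with hN
        have step : F a - lam/2 * ‖a‖^2 + ((inner ℝ ua (b - a) : ℝ)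
            + M⁻¹ * (inner ℝ ua (ua - ub) : ℝ))
            ≤ F b - lam/2 * ‖b‖^2 + M⁻¹ * (inner ℝ ub (ua - ub) : ℝ)
              + (L - lam)/2 * (M⁻¹^2 * N) := by
          rw [← e1, ← e2, ← e3]
          linarith [h1, h2]
        have e4' : M⁻¹ * (inner ℝ ua (ua - ub) : ℝ) - M⁻¹ * (inner ℝ ub (ua - ub) : ℝ)
            = M⁻¹ * N := by rw [← mul_sub, e4]
        have hdiv : (L - lam)/2 * (M⁻¹^2 * N) = M⁻¹ * N - N/(2*M) := by
          have hML : M = L - lam := hM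
          rw [← hML]
          field_simp
          ring
        linarith [step, e4', hdiv]
      have hxy := haux x y
      have hyx := haux y x
      have hsymm : ‖(gradient F y - lam • y) - (gradient F x - lam • x)‖ = ‖u‖ := by
        rw [hudef, ← neg_sub]
        exact norm_neg _
      have hyx' : y - x = -e := by rw [he]; abel
      have hiu : (inner ℝ (gradient F x - lam • x) (y - x) : ℝ)
          + (inner ℝ (gradient F y - lam • y) (x - y) : ℝ) = -(inner ℝ u e : ℝ) := by
        rw [hyx', inner_neg_right, hudef, ← he]
        simp only [inner_sub_left]
        ring
      rw [hsymm] at hyx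
      have h7 : ‖u‖^2/(2*M) + ‖u‖^2/(2*M) = ‖u‖^2/M := by
        field_simp
        ring
      linarith [hxy, hyx, hiu, h7]
    rw [hu] at key
    rw [hinner_ue, hnorm_u] at key
    -- key : t - lam * p ≥ (q - 2 lam t + lam² p)/M
    have hfin : (lam + L) * t ≥ lam * L * p + q := by
      have hM2 : (t - lam * p) * M ≥ q - 2*lam*t + lam^2 * p := by
        rw [ge_iff_le, ← sub_nonneg] at key ⊢
        have := mul_nonneg key hMpos.le
        calc (0:ℝ) ≤ ((t - lam*p) - (q - 2*lam*t + lam^2*p)/M) * M := this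
          _ = (t - lam*p)*M - (q - 2*lam*t + lam^2*p) := by
              field_simp
        
      simp only [hM] at hM2
      nlinarith [hM2]
    have hsplit : lam * L / (lam + L) * p + 1 / (lam + L) * q
        = (lam * L * p + q) / (lam + L) := by
      field_simp
    rw [ge_iff_le, hsplit, div_le_iff₀ hLlam]
    linarith [hfin]
  · -- lam = L
    subst heqq
    have hkey : t ≥ lam/2 * p + q/(2*lam) := by
      set w : E := x - lam⁻¹ • G with hw
      have h1 := descent_lemma F lam hL hF hsmooth x w
      have h2 := hconv y w
      have h3 := hconv x y
      have hwx : w - x = -(lam⁻¹ • G) := by rw [hw]; abel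
      have e1 : (inner ℝ gx (w - x) : ℝ) = -(lam⁻¹ * (inner ℝ gx G : ℝ)) := by
        rw [hwx, inner_neg_right, real_inner_smul_right]
      have e2 : ‖w - x‖^2 = lam⁻¹^2 * q := by
        rw [hwx, norm_neg, norm_smul, Real.norm_eq_abs,
          abs_of_pos (by positivity : (0:ℝ) < lam⁻¹), mul_pow, hq]
      have hwy : w - y = e - lam⁻¹ • G := by rw [hw, he]; abel
      have e3 : (inner ℝ gy (w - y) : ℝ)
          = (inner ℝ gy e : ℝ) - lam⁻¹ * (inner ℝ gy G : ℝ) := by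
        rw [hwy, inner_sub_right, real_inner_smul_right]
      have e4 : (inner ℝ gx e : ℝ) - (inner ℝ gy e : ℝ) = t := by
        rw [ht, hG, inner_sub_left]
      have e5 : (inner ℝ gx G : ℝ) - (inner ℝ gy G : ℝ) = q := by
        rw [hq, hG, ← inner_sub_left]
        exact real_inner_self_eq_norm_sq _
      have e6 : (inner ℝ gx (y - x) : ℝ) = -(inner ℝ gx e : ℝ) := by
        rw [he, ← inner_neg_right, neg_sub]
      have e7 : ‖y - x‖^2 = p := by rw [hp, he, ← neg_sub x y, norm_neg]
      have hpos : (0:ℝ) ≤ lam / 2 * ‖w - y‖^2 :=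
        mul_nonneg (by linarith) (sq_nonneg _)
      have h1' : F w ≤ F x - lam⁻¹ * (inner ℝ gx G : ℝ) + lam/2 * (lam⁻¹^2 * q) := by
        rw [← e2]
        have := h1
        rw [e1] at this
        linarith [this]
      have h2' : F w ≥ F y + ((inner ℝ gy e : ℝ) - lam⁻¹ * (inner ℝ gy G : ℝ)) := by
        have := h2
        rw [e3] at this
        linarith [this, hpos]
      have h3' : F y ≥ F x - (inner ℝ gx e : ℝ) + lam/2 * p := by
        have := h3
        rw [e6, e7] at this
        linarith [this]
      have e5' : lam⁻¹ * (inner ℝ gx G : ℝ) - lam⁻¹ * (inner ℝ gy G : ℝ) = lam⁻¹ * q := by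
        rw [← mul_sub, e5]
      have hq2 : lam/2 * (lam⁻¹^2 * q) = q/(2*lam) := by
        field_simp
      have hq3 : lam⁻¹ * q = 2 * (q/(2*lam)) := by
        field_simp
      linarith [h1', h2', h3', e5', hq2, hq3, e4]
    have ha : lam * lam / (lam + lam) = lam / 2 := by
      have h0 : lam + lam ≠ 0 := by positivity
      field_simp
      ring
    have hb : 1 / (lam + lam) * q = q / (2 * lam) := by
      rw [show lam + lam = 2 * lam by ring, one_div, inv_mul_eq_div]
    rw [ha, hb]
    exact hkey

end Analysis

set_option maxHeartbeats 2000000 in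
/-- One-step contraction of the zero-order update with `μ = 0`. -/
theorem stmt15 (d k : ℕ) (hd : 0 < d) (hk : 0 < k) (F : Euc d → ℝ) (L lam : ℝ)
    (hL : 0 < L) (hlam : 0 < lam) (hlamL : lam ≤ L) (hF : Differentiable ℝ F)
    (hsmooth : ∀ x y : Euc d, ‖gradient F x - gradient F y‖ ≤ L * ‖x - y‖)
    (hconv : ∀ x y : Euc d,
      F y ≥ F x + (inner ℝ (gradient F x) (y - x) : ℝ) + lam / 2 * ‖y - x‖ ^ 2)
    (wstar w : Euc d) (hmin : gradient F wstar = 0) :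
    (∫ z : Fin k → Metric.sphere (0 : Euc d) 1,
        ‖(w - (1 / (((d : ℝ) + k - 1) / k * L)) •
            ((k : ℝ)⁻¹ • ∑ r : Fin k,
              ((d : ℝ) * (inner ℝ (gradient F w) (z r : Euc d) : ℝ)) • (z r : Euc d)))
          - wstar‖ ^ 2
        ∂(Measure.pi fun _ : Fin k => uniformSphere d))
      ≤ (1 - 2 * lam / ((((d : ℝ) + k - 1) / k) * (L + lam))) * ‖w - wstar‖ ^ 2 := by
  haveI hprob : IsProbabilityMeasure (uniformSphere d) := uniformSphere_prob hd
  set Pm : Measure (Fin k → Metric.sphere (0 : Euc d) 1) :=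
    Measure.pi fun _ : Fin k => uniformSphere d with hPm
  haveI hPmprob : IsProbabilityMeasure Pm := by rw [hPm]; infer_instance
  set g : Euc d := gradient F w with hg
  set τ : ℝ := ((d : ℝ) + k - 1) / k with hτ
  set η : ℝ := 1 / (τ * L) with hη
  set X : (Fin k → Metric.sphere (0 : Euc d) 1) → Euc d :=
    fun z => (k : ℝ)⁻¹ • ∑ r : Fin k,
      ((d : ℝ) * (inner ℝ g (z r : Euc d) : ℝ)) • (z r : Euc d) with hX
  set Δ : Euc d := w - wstar with hΔ
  -- basic positivity
  have hk1 : (1:ℝ) ≤ (k:ℝ) := by exact_mod_cast hk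
  have hd1 : (1:ℝ) ≤ (d:ℝ) := by exact_mod_cast hd
  have hkpos : (0:ℝ) < k := by linarith
  have hdpos : (0:ℝ) < d := by linarith
  have hτpos : (0:ℝ) < τ := by
    rw [hτ]
    apply div_pos <;> linarith
  have hηpos : (0:ℝ) < η := by
    rw [hη]
    positivity
  -- continuity facts
  have hcont_coord : ∀ r : Fin k,
      Continuous (fun z : Fin k → Metric.sphere (0 : Euc d) 1 => (z r : Euc d)) :=
    fun r => continuous_subtype_val.comp (continuous_apply r)
  have hcont_inner : ∀ (v : Euc d) (r : Fin k),
      Continuous (fun z : Fin k → Metric.sphere (0 : Euc d) 1 =>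
        (inner ℝ v (z r : Euc d) : ℝ)) :=
    fun v r => (innerSL ℝ v).continuous.comp (hcont_coord r)
  have hXc : Continuous X := by
    rw [hX]
    refine Continuous.fun_const_smul ?_ _
    refine continuous_finset_sum _ (fun r _ => ?_)
    exact (continuous_const.mul (hcont_inner g r)).smul (hcont_coord r)
  have hf1c : Continuous (fun z : Fin k → Metric.sphere (0 : Euc d) 1 =>
      (inner ℝ Δ (X z) : ℝ)) := (innerSL ℝ Δ).continuous.comp hXc
  have hf2c : Continuous (fun z : Fin k → Metric.sphere (0 : Euc d) 1 => ‖X z‖^2) :=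
    (hXc.norm).pow 2
  -- the sphere values have norm one
  have hsph : ∀ y : Metric.sphere (0 : Euc d) 1, (inner ℝ (y:Euc d) (y:Euc d) : ℝ) = 1 := by
    intro y
    rw [real_inner_self_eq_norm_sq, mem_sphere_zero_iff_norm.mp y.2]
    norm_num
  -- first moment
  have hI1 : ∫ z, (inner ℝ Δ (X z) : ℝ) ∂Pm = (inner ℝ g Δ : ℝ) := by
    have hpt : ∀ z : Fin k → Metric.sphere (0 : Euc d) 1,
        (inner ℝ Δ (X z) : ℝ) = (k : ℝ)⁻¹ * ∑ r : Fin k,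
          (d : ℝ) * ((inner ℝ g (z r : Euc d) : ℝ) * (inner ℝ Δ (z r : Euc d) : ℝ)) := by
      intro z
      rw [hX, real_inner_smul_right, inner_sum]
      congr 1
      refine Finset.sum_congr rfl (fun r _ => ?_)
      rw [real_inner_smul_right]
      ring
    rw [integral_congr_ae (Filter.Eventually.of_forall hpt)]
    rw [MeasureTheory.integral_const_mul]
    rw [integral_finset_sum _ (fun r _ => (cont_integrable _
      (Continuous.fun_mul continuous_const ((hcont_inner g r).fun_mul (hcont_inner Δ r)))))]
    have hval : ∀ r : Fin k,
        ∫ z, (d : ℝ) * ((inner ℝ g (z r : Euc d) : ℝ) * (inner ℝ Δ (z r : Euc d) : ℝ)) ∂Pm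
          = (d : ℝ) * ((inner ℝ g Δ : ℝ) / d) := by
      intro r
      rw [MeasureTheory.integral_const_mul]
      congr 1
      have := integral_pi_eval (uniformSphere d) r
        (fun y : Metric.sphere (0 : Euc d) 1 =>
          (inner ℝ g (y : Euc d) : ℝ) * (inner ℝ Δ (y : Euc d) : ℝ))
      beta_reduce at this
      rw [hPm, this, uniformSphere_inner_sq hd g Δ]
    rw [Finset.sum_congr rfl (fun r _ => hval r), Finset.sum_const, Finset.card_univ,
      Fintype.card_fin, nsmul_eq_mul]
    have hdne : (d:ℝ) ≠ 0 := by linarith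
    have hkne : (k:ℝ) ≠ 0 := by linarith
    field_simp
  -- second moment
  have hterm : ∀ r s : Fin k,
      ∫ z, ((d : ℝ) * (inner ℝ g (z r : Euc d) : ℝ)) *
          (((d : ℝ) * (inner ℝ g (z s : Euc d) : ℝ)) *
            (inner ℝ (z r : Euc d) (z s : Euc d) : ℝ)) ∂Pm
        = if r = s then (d : ℝ) * ‖g‖^2 else ‖g‖^2 := by
    intro r s
    by_cases hrs : r = s
    · subst hrs
      rw [if_pos rfl]
      have hpt : ∀ z : Fin k → Metric.sphere (0 : Euc d) 1,
          ((d : ℝ) * (inner ℝ g (z r : Euc d) : ℝ)) *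
              (((d : ℝ) * (inner ℝ g (z r : Euc d) : ℝ)) *
                (inner ℝ (z r : Euc d) (z r : Euc d) : ℝ))
            = (d:ℝ)^2 * ((inner ℝ g (z r : Euc d) : ℝ) * (inner ℝ g (z r : Euc d) : ℝ)) := by
        intro z
        rw [hsph (z r)]
        ring
      rw [integral_congr_ae (Filter.Eventually.of_forall hpt)]
      rw [MeasureTheory.integral_const_mul]
      have := integral_pi_eval (uniformSphere d) r
        (fun y : Metric.sphere (0 : Euc d) 1 =>
          (inner ℝ g (y : Euc d) : ℝ) * (inner ℝ g (y : Euc d) : ℝ))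
      beta_reduce at this
      rw [hPm, this, uniformSphere_inner_sq hd g g, real_inner_self_eq_norm_sq]
      have hdne : (d:ℝ) ≠ 0 := by linarith
      field_simp
    · rw [if_neg hrs]
      have hpt : ∀ z : Fin k → Metric.sphere (0 : Euc d) 1,
          ((d : ℝ) * (inner ℝ g (z r : Euc d) : ℝ)) *
              (((d : ℝ) * (inner ℝ g (z s : Euc d) : ℝ)) *
                (inner ℝ (z r : Euc d) (z s : Euc d) : ℝ))
            = ∑ i : Fin d, ((d : ℝ) * ((inner ℝ g (z r : Euc d) : ℝ) * (z r : Euc d) i)) *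
                ((d : ℝ) * ((inner ℝ g (z s : Euc d) : ℝ) * (z s : Euc d) i)) := by
        intro z
        rw [real_inner_euc (z r : Euc d) (z s : Euc d), Finset.mul_sum]
        rw [Finset.mul_sum]
        refine Finset.sum_congr rfl (fun i _ => ?_)
        ring
      rw [integral_congr_ae (Filter.Eventually.of_forall hpt)]
      rw [integral_finset_sum _ (fun i _ => cont_integrable _ ?_)]
      · have hival : ∀ i : Fin d,
            ∫ z, ((d : ℝ) * ((inner ℝ g (z r : Euc d) : ℝ) * (z r : Euc d) i)) *
                ((d : ℝ) * ((inner ℝ g (z s : Euc d) : ℝ) * (z s : Euc d) i)) ∂Pm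
              = g i * g i := by
          intro i
          have h2 := integral_pi_eval2 (uniformSphere d) hrs
            (fun y : Metric.sphere (0 : Euc d) 1 =>
              (d : ℝ) * ((inner ℝ g (y : Euc d) : ℝ) * (y : Euc d) i))
            (fun y : Metric.sphere (0 : Euc d) 1 =>
              (d : ℝ) * ((inner ℝ g (y : Euc d) : ℝ) * (y : Euc d) i))
          beta_reduce at h2
          rw [hPm, h2]
          have hone : ∫ y : Metric.sphere (0 : Euc d) 1,
              (d : ℝ) * ((inner ℝ g (y : Euc d) : ℝ) * (y : Euc d) i) ∂(uniformSphere d)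
              = g i := by
            rw [MeasureTheory.integral_const_mul, uniformSphere_inner_mul_coord hd g i]
            have hdne : (d:ℝ) ≠ 0 := by linarith
            field_simp
          rw [hone]
        rw [Finset.sum_congr rfl (fun i _ => hival i)]
        rw [euc_norm_sq g]
        exact Finset.sum_congr rfl (fun i _ => by ring)
      · exact (continuous_const.mul ((hcont_inner g r).mul
          ((EuclideanSpace.proj i).continuous.comp (hcont_coord r)))).mul
          (continuous_const.mul ((hcont_inner g s).mul
          ((EuclideanSpace.proj i).continuous.comp (hcont_coord s))))
  have hI2 : ∫ z, ‖X z‖^2 ∂Pm = τ * ‖g‖^2 := by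
    have hpt : ∀ z : Fin k → Metric.sphere (0 : Euc d) 1,
        ‖X z‖^2 = (k : ℝ)⁻¹ * ((k : ℝ)⁻¹ * ∑ r : Fin k, ∑ s : Fin k,
          ((d : ℝ) * (inner ℝ g (z r : Euc d) : ℝ)) *
            (((d : ℝ) * (inner ℝ g (z s : Euc d) : ℝ)) *
              (inner ℝ (z r : Euc d) (z s : Euc d) : ℝ))) := by
      intro z
      rw [← real_inner_self_eq_norm_sq, hX]
      rw [real_inner_smul_left, real_inner_smul_right, sum_inner]
      congr 2
      refine Finset.sum_congr rfl (fun r _ => ?_)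
      rw [inner_sum]
      refine Finset.sum_congr rfl (fun s _ => ?_)
      rw [real_inner_smul_left, real_inner_smul_right]
    rw [integral_congr_ae (Filter.Eventually.of_forall hpt)]
    rw [MeasureTheory.integral_const_mul, MeasureTheory.integral_const_mul]
    have hcontrs : ∀ r s : Fin k, Continuous
        (fun z : Fin k → Metric.sphere (0 : Euc d) 1 =>
          ((d : ℝ) * (inner ℝ g (z r : Euc d) : ℝ)) *
            (((d : ℝ) * (inner ℝ g (z s : Euc d) : ℝ)) *
              (inner ℝ (z r : Euc d) (z s : Euc d) : ℝ))) := by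
      intro r s
      have hin : Continuous (fun z : Fin k → Metric.sphere (0 : Euc d) 1 =>
          (inner ℝ (z r : Euc d) (z s : Euc d) : ℝ)) := by
        have : Continuous (fun p : Euc d × Euc d => (inner ℝ p.1 p.2 : ℝ)) :=
          continuous_inner
        exact this.comp ((hcont_coord r).prodMk (hcont_coord s))
      exact (continuous_const.mul (hcont_inner g r)).mul
        ((continuous_const.mul (hcont_inner g s)).mul hin)
    rw [integral_finset_sum _ (fun r _ => cont_integrable _
      (continuous_finset_sum _ (fun s _ => hcontrs r s)))]
    rw [Finset.sum_congr rfl (fun r _ =>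
      integral_finset_sum _ (fun s _ => cont_integrable _ (hcontrs r s)))]
    rw [Finset.sum_congr rfl (fun r _ =>
      Finset.sum_congr rfl (fun s _ => hterm r s))]
    have hinner_sum : ∀ r : Fin k,
        (∑ s : Fin k, if r = s then (d : ℝ) * ‖g‖^2 else ‖g‖^2)
          = (d : ℝ) * ‖g‖^2 + ((k:ℝ) - 1) * ‖g‖^2 := by
      intro r
      have : ∀ s : Fin k, (if r = s then (d : ℝ) * ‖g‖^2 else ‖g‖^2)
          = (if r = s then (d : ℝ) * ‖g‖^2 - ‖g‖^2 else 0) + ‖g‖^2 := by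
        intro s
        split_ifs <;> ring
      rw [Finset.sum_congr rfl (fun s _ => this s), Finset.sum_add_distrib,
        Finset.sum_ite_eq Finset.univ r (fun _ => (d : ℝ) * ‖g‖^2 - ‖g‖^2),
        if_pos (Finset.mem_univ r), Finset.sum_const, Finset.card_univ, Fintype.card_fin,
        nsmul_eq_mul]
      ring
    rw [Finset.sum_congr rfl (fun r _ => hinner_sum r), Finset.sum_const,
      Finset.card_univ, Fintype.card_fin, nsmul_eq_mul]
    rw [hτ]
    have hkne : (k:ℝ) ≠ 0 := by linarith
    field_simp
    ring
  -- pointwise expansion of the integrand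
  have hrw : ∀ z : Fin k → Metric.sphere (0 : Euc d) 1,
      ‖(w - η • X z) - wstar‖^2
        = ‖Δ‖^2 - 2*η*(inner ℝ Δ (X z) : ℝ) + η^2 * ‖X z‖^2 := by
    intro z
    have hab : (w - η • X z) - wstar = Δ - η • X z := by
      rw [hΔ]; abel
    rw [hab, norm_sub_sq_real, real_inner_smul_right, norm_smul, Real.norm_eq_abs,
      mul_pow, sq_abs]
    ring
  have hIcalc : (∫ z, ‖(w - η • X z) - wstar‖^2 ∂Pm)
      = ‖Δ‖^2 - 2*η*(inner ℝ g Δ : ℝ) + η^2 * (τ * ‖g‖^2) := by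
    rw [integral_congr_ae (Filter.Eventually.of_forall hrw)]
    have hint1 : Integrable (fun z : Fin k → Metric.sphere (0 : Euc d) 1 =>
        2*η*(inner ℝ Δ (X z) : ℝ)) Pm :=
      cont_integrable _ (continuous_const.mul hf1c)
    have hint2 : Integrable (fun z : Fin k → Metric.sphere (0 : Euc d) 1 =>
        η^2 * ‖X z‖^2) Pm :=
      cont_integrable _ (continuous_const.mul hf2c)
    have hsub : Integrable (fun z : Fin k → Metric.sphere (0 : Euc d) 1 =>
        ‖Δ‖^2 - 2*η*(inner ℝ Δ (X z) : ℝ)) Pm := (integrable_const _).sub hint1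
    have hadd : ∫ z, (‖Δ‖^2 - 2*η*(inner ℝ Δ (X z) : ℝ) + η^2 * ‖X z‖^2) ∂Pm
        = (∫ z, (‖Δ‖^2 - 2*η*(inner ℝ Δ (X z) : ℝ)) ∂Pm)
          + ∫ z, (η^2 * ‖X z‖^2) ∂Pm := integral_add hsub hint2
    have hA : ∫ z, (‖Δ‖^2 - 2*η*(inner ℝ Δ (X z) : ℝ)) ∂Pm
        = (∫ _z : Fin k → Metric.sphere (0 : Euc d) 1, (‖Δ‖^2 : ℝ) ∂Pm)
          - ∫ z, (2*η*(inner ℝ Δ (X z) : ℝ)) ∂Pm := integral_sub (integrable_const _) hint1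
    have hB : ∫ z, (2*η*(inner ℝ Δ (X z) : ℝ)) ∂Pm
        = 2*η* ∫ z, (inner ℝ Δ (X z) : ℝ) ∂Pm := MeasureTheory.integral_const_mul _ _
    have hC : ∫ z, (η^2 * ‖X z‖^2) ∂Pm
        = η^2 * ∫ z, ‖X z‖^2 ∂Pm := MeasureTheory.integral_const_mul _ _
    have hconst : (∫ _z : Fin k → Metric.sphere (0 : Euc d) 1, (‖Δ‖^2 : ℝ) ∂Pm) = ‖Δ‖^2 := by
      simp [measure_univ]
    rw [hadd, hA, hB, hC, hconst, hI1, hI2]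
  -- the goal integrand coincides with the expansion
  have hXbeta : ∀ z : Fin k → Metric.sphere (0 : Euc d) 1,
      (k : ℝ)⁻¹ • ∑ r : Fin k,
        ((d : ℝ) * (inner ℝ g (z r : Euc d) : ℝ)) • (z r : Euc d) = X z :=
    fun z => by rw [hX]
  simp only [hXbeta]
  rw [hIcalc]
  -- final scalar inequality using co-coercivity
  have hcoco := coco F L lam hL hlam hlamL hF hsmooth hconv w wstar
  rw [hmin, sub_zero, ← hg, ← hΔ] at hcoco
  set p : ℝ := ‖Δ‖^2 with hp
  set Q : ℝ := ‖g‖^2 with hQ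
  set T : ℝ := (inner ℝ g Δ : ℝ) with hT
  have hpnn : 0 ≤ p := sq_nonneg _
  have hQnn : 0 ≤ Q := sq_nonneg _
  have hLlam : (0:ℝ) < lam + L := by linarith
  -- hcoco : T ≥ lam*L/(lam+L) * p + 1/(lam+L) * Q
  have hη2 : η^2 * τ = η / L := by
    rw [hη]
    field_simp
  have h1 : 2*η*(lam*L/(lam+L) * p + 1/(lam+L) * Q) ≤ 2*η*T :=
    mul_le_mul_of_nonneg_left hcoco (by positivity)
  have hcoef : η/L ≤ 2*η*(1/(lam+L)) := by
    have hid : 2*η*(1/(lam+L)) - η/L = η * ((L - lam)/(L*(lam+L))) := by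
      field_simp
      ring
    have hnn : 0 ≤ η * ((L - lam)/(L*(lam+L))) := by
      apply mul_nonneg hηpos.le
      apply div_nonneg (by linarith) (by positivity)
    linarith [hid, hnn]
  have h2 : η/L * Q ≤ 2*η*(1/(lam+L)) * Q :=
    mul_le_mul_of_nonneg_right hcoef hQnn
  have hident : 2*η*(lam*L/(lam+L)) = 2 * lam / (τ * (L + lam)) := by
    rw [hη]
    have hτne : τ ≠ 0 := hτpos.ne'
    field_simp
    ring
  have hexp : 2*η*(lam*L/(lam+L) * p + 1/(lam+L) * Q)
      = (2*η*(lam*L/(lam+L))) * p + (2*η*(1/(lam+L))) * Q := by ring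
  have hfinal : p - 2*η*T + η^2 * (τ * Q)
      ≤ (1 - 2 * lam / (τ * (L + lam))) * p := by
    have hη2Q : η^2 * (τ * Q) = η/L * Q := by
      rw [← hη2]; ring
    rw [hη2Q]
    have := h1
    rw [hexp] at this
    have hgoal2 : (1 - 2 * lam / (τ * (L + lam))) * p
        = p - (2 * lam / (τ * (L + lam))) * p := by ring
    rw [hgoal2, ← hident]
    linarith [this, h2]
  calc p - 2*η*T + η^2 * (τ * Q) ≤ (1 - 2 * lam / (τ * (L + lam))) * p := hfinal
    _ = (1 - 2 * lam / (τ * (L + lam))) * ‖w - wstar‖^2 := by rw [hp, hΔ]
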